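/- For each k ≥ 1, the following identity holds: ∑ (2^k k!)/(∏_{i=1}^k (2i)^{λ_i} λ_i!) = (2k−1)!!, where the sum is over all sequences (λ_1,...,λ_k) of non-negative integers with λ_1 + 2λ_2 + ... + kλ_k = k. -/

import Mathlib

open Finset

namespace PDFI

/-- factor at value `j` -/
def f (m : Multiset ℕ) (j : ℕ) : ℚ :=
  (2 * (j : ℚ)) ^ (m.count j) * (Nat.factorial (m.count j) : ℚ)

/-- weight of a multiset -/
def W (m : Multiset ℕ) : ℚ := ∏ j ∈ m.toFinset, f m j

lemma f_pos (m : Multiset ℕ) (j : ℕ) (hj : 0 < j) : 0 < f m j := by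
  have h1 : (0:ℚ) < 2 * j := by positivity
  have h2 : (0:ℚ) < (Nat.factorial (m.count j) : ℚ) := by
    exact_mod_cast Nat.factorial_pos _
  exact mul_pos (pow_pos h1 _) h2

lemma W_pos (m : Multiset ℕ) (hm : ∀ j ∈ m, 0 < j) : 0 < W m :=
  Finset.prod_pos fun j hj => f_pos m j (hm j (Multiset.mem_toFinset.mp hj))

lemma W_eq_prod_erase (m : Multiset ℕ) (i : ℕ) :
    W m = f m i * ∏ j ∈ m.toFinset.erase i, f m j := by
  by_cases h : i ∈ m.toFinset
  · rw [W, ← Finset.mul_prod_erase _ _ h]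
  · rw [Finset.erase_eq_of_notMem h, W]
    have hc : m.count i = 0 := by
      rwa [Multiset.count_eq_zero, ← Multiset.mem_toFinset]
    simp [f, hc]

lemma W_cons (i : ℕ) (m : Multiset ℕ) :
    W (i ::ₘ m) = (2 * (i:ℚ) * ((m.count i : ℚ) + 1)) * W m := by
  rw [W_eq_prod_erase (i ::ₘ m) i, W_eq_prod_erase m i]
  have ht : (i ::ₘ m).toFinset.erase i = m.toFinset.erase i := by
    ext j
    simp only [Finset.mem_erase, Multiset.mem_toFinset, Multiset.mem_cons]
    constructor
    · rintro ⟨hne, h | h⟩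
      · exact absurd h hne
      · exact ⟨hne, h⟩
    · rintro ⟨hne, h⟩; exact ⟨hne, Or.inr h⟩
  rw [ht]
  have hprod : ∏ j ∈ m.toFinset.erase i, f (i ::ₘ m) j
      = ∏ j ∈ m.toFinset.erase i, f m j := by
    refine Finset.prod_congr rfl fun j hj => ?_
    have hne : j ≠ i := Finset.ne_of_mem_erase hj
    simp [f, Multiset.count_cons_of_ne hne]
  have hf : f (i ::ₘ m) i = (2 * (i:ℚ) * ((m.count i : ℚ) + 1)) * f m i := by
    simp only [f, Multiset.count_cons_self, pow_succ, Nat.factorial_succ]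
    push_cast
    ring
  rw [hprod, hf]
  ring

/-- the partition sum -/
noncomputable def S (n : ℕ) : ℚ := ∑ P : Nat.Partition n, (W P.parts)⁻¹

lemma S_zero : S 0 = 1 := by
  rw [S, Fintype.sum_subsingleton _ (default : Nat.Partition 0)]
  simp [W]

lemma sum_count (m : Multiset ℕ) (s : Finset ℕ) (hs : m.toFinset ⊆ s) :
    ∑ i ∈ s, i * m.count i = m.sum := by
  rw [← Finset.sum_subset hs (fun x _ hx => by
    have : m.count x = 0 := by
      rwa [Multiset.count_eq_zero, ← Multiset.mem_toFinset]
    simp [this])]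
  have h := Finset.sum_multiset_map_count m (fun x => x)
  simp only [smul_eq_mul] at h
  rw [Multiset.map_id'] at h
  rw [h]
  exact Finset.sum_congr rfl fun x _ => mul_comm _ _

lemma parts_mem_Icc {n : ℕ} (P : Nat.Partition n) : P.parts.toFinset ⊆ Finset.Icc 1 n := by
  intro j hj
  have hj' : j ∈ P.parts := Multiset.mem_toFinset.mp hj
  have h1 : 0 < j := P.parts_pos hj'
  have h2 : j ≤ n := P.parts_sum ▸ Multiset.le_sum_of_mem hj'
  exact Finset.mem_Icc.mpr ⟨h1, h2⟩

lemma slice (n i : ℕ) (h1 : 1 ≤ i) (h2 : i ≤ n) :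
    ∑ P : Nat.Partition n, ((i:ℚ) * (P.parts.count i : ℚ)) * (W P.parts)⁻¹
      = S (n - i) / 2 := by
  rw [← Finset.sum_filter_of_ne (p := fun P : Nat.Partition n => i ∈ P.parts)
    (fun P _ h => by
      by_contra hmem
      have : P.parts.count i = 0 := Multiset.count_eq_zero.mpr hmem
      simp [this] at h)]
  rw [S, Finset.sum_div]
  symm
  refine Finset.sum_bij' (i := fun Q _ => (⟨i ::ₘ Q.parts, ?_, ?_⟩ : Nat.Partition n))
    (j := fun P hP => (⟨P.parts.erase i, ?_, ?_⟩ : Nat.Partition (n - i)))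
    ?_ ?_ ?_ ?_ ?_
  · intro j hj
    rcases Multiset.mem_cons.mp hj with h | h
    · exact h ▸ h1
    · exact Q.parts_pos h
  · rw [Multiset.sum_cons, Q.parts_sum, Nat.add_sub_cancel' h2]
  · intro j hj
    exact P.parts_pos (Multiset.mem_of_mem_erase hj)
  · have hmem : i ∈ P.parts := (Finset.mem_filter.mp hP).2
    have hc := Multiset.cons_erase hmem
    have h3 : i + (P.parts.erase i).sum = n := by
      rw [← Multiset.sum_cons, hc, P.parts_sum]
    omega
  · intro Q _
    simp only [Finset.mem_filter, Finset.mem_univ, true_and]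
    exact Multiset.mem_cons_self i _
  · intro P _
    exact Finset.mem_univ _
  · intro Q _
    apply Nat.Partition.ext
    simp
  · intro P hP
    apply Nat.Partition.ext
    exact Multiset.cons_erase (Finset.mem_filter.mp hP).2
  · intro Q _
    simp only
    rw [W_cons]
    rw [Multiset.count_cons_self]
    have hi0 : (0:ℚ) < (i:ℚ) := by exact_mod_cast h1
    have hc0 : (0:ℚ) < (Q.parts.count i : ℚ) + 1 := by positivity
    have hW : 0 < W Q.parts := W_pos _ fun j hj => Q.parts_pos hj
    push_cast
    field_simp

lemma key (n : ℕ) : 2 * (n:ℚ) * S n = ∑ i ∈ Finset.Icc 1 n, S (n - i) := by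
  have h1 : (n:ℚ) * S n
      = ∑ P : Nat.Partition n,
          (∑ i ∈ Finset.Icc 1 n, (i:ℚ) * (P.parts.count i : ℚ)) * (W P.parts)⁻¹ := by
    rw [S, Finset.mul_sum]
    refine Finset.sum_congr rfl fun P _ => ?_
    congr 1
    have h := sum_count P.parts (Finset.Icc 1 n) (parts_mem_Icc P)
    rw [P.parts_sum] at h
    exact_mod_cast h.symm
  have h2 : ∑ P : Nat.Partition n,
      (∑ i ∈ Finset.Icc 1 n, (i:ℚ) * (P.parts.count i : ℚ)) * (W P.parts)⁻¹
      = ∑ i ∈ Finset.Icc 1 n, ∑ P : Nat.Partition n,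
          ((i:ℚ) * (P.parts.count i : ℚ)) * (W P.parts)⁻¹ := by
    simp_rw [Finset.sum_mul]
    exact Finset.sum_comm
  have h3 : ∑ i ∈ Finset.Icc 1 n, ∑ P : Nat.Partition n,
      ((i:ℚ) * (P.parts.count i : ℚ)) * (W P.parts)⁻¹
      = ∑ i ∈ Finset.Icc 1 n, S (n - i) / 2 := by
    refine Finset.sum_congr rfl fun i hi => ?_
    obtain ⟨hi1, hi2⟩ := Finset.mem_Icc.mp hi
    exact slice n i hi1 hi2
  rw [show 2 * (n:ℚ) * S n = 2 * ((n:ℚ) * S n) by ring, h1, h2, h3, ← Finset.sum_div]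
  field_simp

/-- target value -/
noncomputable def T (n : ℕ) : ℚ :=
  (Nat.doubleFactorial (2 * n - 1) : ℚ) / (2 ^ n * (Nat.factorial n : ℚ))

lemma T_zero : T 0 = 1 := by simp [T, Nat.doubleFactorial]

lemma T_pos (n : ℕ) : 0 < T n := by
  have h1 : (0:ℚ) < (Nat.doubleFactorial (2 * n - 1) : ℚ) := by
    exact_mod_cast Nat.doubleFactorial_pos _
  have h2 : (0:ℚ) < (Nat.factorial n : ℚ) := by exact_mod_cast Nat.factorial_pos _
  have h3 : (0:ℚ) < (2:ℚ) ^ n := by positivity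
  rw [T]; positivity

lemma T_succ (n : ℕ) : T (n + 1) = (2 * (n:ℚ) + 1) / (2 * ((n:ℚ) + 1)) * T n := by
  have hd : Nat.doubleFactorial (2 * (n + 1) - 1)
      = (2 * n + 1) * Nat.doubleFactorial (2 * n - 1) := by
    rcases Nat.eq_zero_or_pos n with rfl | hn
    · simp [Nat.doubleFactorial]
    · have h : 2 * (n + 1) - 1 = (2 * n - 1) + 2 := by omega
      rw [h, Nat.doubleFactorial_add_two]
      congr 1
      omega
  rw [T, T, hd, pow_succ, Nat.factorial_succ]
  have h2 : (0:ℚ) < (Nat.factorial n : ℚ) := by exact_mod_cast Nat.factorial_pos _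
  push_cast
  field_simp

lemma Tsum : ∀ n, ∑ j ∈ Finset.range n, T j = 2 * (n:ℚ) * T n := by
  intro n
  induction n with
  | zero => simp
  | succ n ih =>
    rw [Finset.sum_range_succ, ih, T_succ]
    have h : (0:ℚ) < 2 * ((n:ℚ) + 1) := by positivity
    push_cast
    field_simp

lemma S_eq_T : ∀ n, S n = T n := by
  intro n
  induction n using Nat.strong_induction_on with
  | _ n ih =>
    rcases Nat.eq_zero_or_pos n with rfl | hn
    · rw [S_zero, T_zero]
    · have hk := key n
      have hre : ∑ i ∈ Finset.Icc 1 n, S (n - i) = ∑ j ∈ Finset.range n, T j := by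
        rw [show ∑ i ∈ Finset.Icc 1 n, S (n - i)
            = ∑ i ∈ Finset.range n, S (n - (i + 1)) from
          (Finset.sum_bij' (i := fun a _ => a - 1) (j := fun a _ => a + 1)
            (fun a ha => by
              simp only [Finset.mem_Icc] at ha; simp only [Finset.mem_range]; omega)
            (fun a ha => by
              simp only [Finset.mem_range] at ha; simp only [Finset.mem_Icc]; omega)
            (fun a ha => by simp only [Finset.mem_Icc] at ha; omega)
            (fun a _ => by omega)
            (fun a ha => by
              simp only [Finset.mem_Icc] at ha
              congr 1
              omega))]
        have : ∀ i ∈ Finset.range n, S (n - (i + 1)) = T (n - 1 - i) := by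
          intro i hi
          rw [Finset.mem_range] at hi
          rw [show n - (i + 1) = n - 1 - i by omega]
          exact ih _ (by omega)
        rw [Finset.sum_congr rfl this, Finset.sum_range_reflect]
      rw [hre, Tsum] at hk
      have hn' : (2 * (n:ℚ)) ≠ 0 := by
        have : (0:ℚ) < (n:ℚ) := by exact_mod_cast hn
        positivity
      have := mul_left_cancel₀ hn' (by linarith [hk] : 2 * (n:ℚ) * S n = 2 * (n:ℚ) * T n)
      exact this

lemma prodW (k : ℕ) (P : Nat.Partition k) :
    ∏ i ∈ Finset.range k,
      ((2 * ((i : ℚ) + 1)) ^ (Multiset.count (i + 1) P.parts) *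
        (Nat.factorial (Multiset.count (i + 1) P.parts) : ℚ)) = W P.parts := by
  have h1 : ∏ i ∈ Finset.range k,
      ((2 * ((i : ℚ) + 1)) ^ (Multiset.count (i + 1) P.parts) *
        (Nat.factorial (Multiset.count (i + 1) P.parts) : ℚ))
      = ∏ j ∈ Finset.Icc 1 k, f P.parts j := by
    refine Finset.prod_bij' (i := fun a _ => a + 1) (j := fun a _ => a - 1)
      (fun a ha => by
        simp only [Finset.mem_range] at ha; simp only [Finset.mem_Icc]; omega)
      (fun a ha => by
        simp only [Finset.mem_Icc] at ha; simp only [Finset.mem_range]; omega)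
      (fun a _ => by omega)
      (fun a ha => by simp only [Finset.mem_Icc] at ha; omega)
      (fun a _ => by
        simp only [f]
        push_cast
        ring_nf)
  rw [h1, W]
  symm
  refine Finset.prod_subset (parts_mem_Icc P) (fun x _ hx => ?_)
  have : P.parts.count x = 0 := by
    rwa [Multiset.count_eq_zero, ← Multiset.mem_toFinset]
  simp [f, this]

end PDFI

/-- `∑_{λ₁+2λ₂+⋯+kλ_k = k} (2^k k!)/(∏_{i=1}^k (2i)^{λ_i} λ_i!) = (2k−1)!!`, where the sum
is over partitions of `k` encoded by their multiplicities `λ_i = count i`. -/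
theorem partition_double_factorial_identity (k : ℕ) (hk : 1 ≤ k) :
    ∑ P : Nat.Partition k,
      ((2 : ℚ) ^ k * (Nat.factorial k : ℚ)) /
        ∏ i ∈ Finset.range k,
          ((2 * ((i : ℚ) + 1)) ^ (Multiset.count (i + 1) P.parts) *
            (Nat.factorial (Multiset.count (i + 1) P.parts) : ℚ)) =
      (Nat.doubleFactorial (2 * k - 1) : ℚ) := by
  have h1 : ∀ P : Nat.Partition k,
      ((2 : ℚ) ^ k * (Nat.factorial k : ℚ)) /
        ∏ i ∈ Finset.range k,
          ((2 * ((i : ℚ) + 1)) ^ (Multiset.count (i + 1) P.parts) *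
            (Nat.factorial (Multiset.count (i + 1) P.parts) : ℚ))
      = ((2 : ℚ) ^ k * (Nat.factorial k : ℚ)) * (PDFI.W P.parts)⁻¹ := by
    intro P
    rw [PDFI.prodW k P, div_eq_mul_inv]
  rw [Finset.sum_congr rfl (fun P _ => h1 P), ← Finset.mul_sum]
  rw [show ∑ P : Nat.Partition k, (PDFI.W P.parts)⁻¹ = PDFI.S k from rfl]
  rw [PDFI.S_eq_T, PDFI.T]
  have h2 : (0:ℚ) < (Nat.factorial k : ℚ) := by exact_mod_cast Nat.factorial_pos _
  have h3 : (0:ℚ) < (2:ℚ) ^ k := by positivity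
  field_simp
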